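/- Converse Lelieuvre construction for the 5-point scheme: let N : ℤ² → ℝ³ and a, b : ℤ² → ℝ satisfy, for all (m,n), ( a(m,n)·N(m+1,n) + a(m−1,n)·N(m−1,n) + b(m,n)·N(m,n+1) + b(m,n−1)·N(m,n−1) ) × N(m,n) = 0 (in particular this holds when N solves the self-adjoint 5-point scheme a(m,n)N(m+1,n) + a(m−1,n)N(m−1,n) + b(m,n)N(m,n+1) + b(m,n−1)N(m,n−1) = f(m,n)N(m,n) componentwise for some f : ℤ² → ℝ). Then there exists r : ℤ² → ℝ³ with Δ_m r(m,n) = −b(m,n−1)·( N(m,n) × N(m,n−1) ) and Δ_n r(m,n) = a(m−1,n)·( N(m,n) × N(m−1,n) ) for all (m,n); moreover any such r satisfies ⟨N(m,n), Δ_m r(m,n)⟩ = 0, ⟨N(m,n), Δ_n r(m,n)⟩ = 0 and ⟨N(m,n), Δ_m Δ_n r(m,n)⟩ = 0 for all (m,n), i.e. r is a 2D quadrilateral lattice having N as a co-normal field. -/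

import Mathlib

open Matrix

lemma exists_antideriv {E : Type*} [AddCommGroup E] (s : ℤ → E) :
    ∃ f : ℤ → E, f 0 = 0 ∧ ∀ n : ℤ, f (n + 1) - f n = s n := by
  refine ⟨fun n => (∑ i ∈ Finset.range n.toNat, s i)
      - (∑ i ∈ Finset.range (-n).toNat, s (-(i + 1 : ℤ))), by simp, fun n => ?_⟩
  dsimp only
  rcases le_or_gt 0 n with hn | hn
  · have h1 : (n + 1).toNat = n.toNat + 1 := by omega
    have h2 : (-(n + 1)).toNat = 0 := by omega
    have h3 : (-n).toNat = 0 := by omega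
    rw [h1, h2, h3, Finset.sum_range_succ]
    simp [Int.toNat_of_nonneg hn]
  · have h1 : (n + 1).toNat = 0 := by omega
    have h4 : n.toNat = 0 := by omega
    have h2 : (-n).toNat = (-(n + 1)).toNat + 1 := by omega
    rw [h1, h4, h2, Finset.sum_range_succ]
    have h5 : (-(((-(n + 1)).toNat : ℤ) + 1)) = n := by omega
    rw [h5]
    abel

/-- Converse Lelieuvre construction for the 5-point scheme: if the co-normal field
`N` satisfies the self-adjoint 5-point scheme up to a scalar multiple of `N`, then
there exists a lattice `r` given by the discrete Lelieuvre formulas, and any such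
`r` is a 2D quadrilateral lattice having `N` as a co-normal field. -/
theorem converse_lelieuvre_5point
    (N : ℤ → ℤ → (Fin 3 → ℝ)) (a b : ℤ → ℤ → ℝ)
    (h : ∀ m k : ℤ,
      (a m k • N (m + 1) k + a (m - 1) k • N (m - 1) k
        + b m k • N m (k + 1) + b m (k - 1) • N m (k - 1)) ⨯₃ N m k = 0) :
    (∃ r : ℤ → ℤ → (Fin 3 → ℝ), ∀ m k : ℤ,
        r (m + 1) k - r m k = -(b m (k - 1) • (N m k ⨯₃ N m (k - 1))) ∧
        r m (k + 1) - r m k = a (m - 1) k • (N m k ⨯₃ N (m - 1) k)) ∧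
    (∀ r : ℤ → ℤ → (Fin 3 → ℝ),
      (∀ m k : ℤ,
        r (m + 1) k - r m k = -(b m (k - 1) • (N m k ⨯₃ N m (k - 1))) ∧
        r m (k + 1) - r m k = a (m - 1) k • (N m k ⨯₃ N (m - 1) k)) →
      ∀ m k : ℤ,
        N m k ⬝ᵥ (r (m + 1) k - r m k) = 0 ∧
        N m k ⬝ᵥ (r m (k + 1) - r m k) = 0 ∧
        N m k ⬝ᵥ (r (m + 1) (k + 1) - r (m + 1) k - r m (k + 1) + r m k) = 0) := by
  have hanti : ∀ (v w : Fin 3 → ℝ), v ⨯₃ w = -(w ⨯₃ v) := fun v w =>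
    (cross_anticomm w v).symm
  set U : ℤ → ℤ → (Fin 3 → ℝ) :=
    fun m k => -(b m (k - 1) • (N m k ⨯₃ N m (k - 1))) with hU
  set V : ℤ → ℤ → (Fin 3 → ℝ) :=
    fun m k => a (m - 1) k • (N m k ⨯₃ N (m - 1) k) with hV
  have compat : ∀ m k : ℤ, U m (k + 1) - U m k = V (m + 1) k - V m k := by
    intro m k
    have h' := h m k
    simp only [map_add, _root_.map_smul, LinearMap.add_apply, LinearMap.smul_apply] at h'
    have key : U m (k + 1) - U m k - (V (m + 1) k - V m k)
        = -(a m k • (N (m + 1) k ⨯₃ N m k) + a (m - 1) k • (N (m - 1) k ⨯₃ N m k)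
            + b m k • (N m (k + 1) ⨯₃ N m k) + b m (k - 1) • (N m (k - 1) ⨯₃ N m k)) := by
      simp only [hU, hV]
      simp only [add_sub_cancel_right]
      rw [hanti (N m k) (N m (k - 1)), hanti (N m k) (N (m - 1) k)]
      module
    rw [h', neg_zero] at key
    have := sub_eq_zero.mp key
    exact this
  constructor
  · obtain ⟨c, -, hc⟩ := exists_antideriv (fun m => U m 0)
    have hg := fun m => exists_antideriv (V m)
    choose g hg0 hgs using hg
    refine ⟨fun m k => c m + g m k, fun m k => ?_⟩
    have hΔn : ∀ m k : ℤ, (c m + g m (k + 1)) - (c m + g m k) = V m k := by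
      intro m k
      have := hgs m k
      calc (c m + g m (k + 1)) - (c m + g m k) = g m (k + 1) - g m k := by abel
        _ = V m k := this
    have hΔm : ∀ j : ℤ, (c (m + 1) + g (m + 1) j) - (c m + g m j) = U m j := by
      intro j
      induction j using Int.induction_on with
      | zero =>
        rw [hg0, hg0]
        have := hc m
        calc (c (m + 1) + 0) - (c m + 0) = c (m + 1) - c m := by abel
          _ = U m 0 := this
      | succ j hj =>
        have e1 := hgs (m + 1) j
        have e2 := hgs m j
        have e3 := compat m j
        have e4 : U m (j + 1) = U m j + (V (m + 1) j - V m j) := by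
          rw [← e3]; abel
        calc (c (m + 1) + g (m + 1) (j + 1)) - (c m + g m (j + 1))
            = ((c (m + 1) + g (m + 1) j) - (c m + g m j))
              + ((g (m + 1) (j + 1) - g (m + 1) j) - (g m (j + 1) - g m j)) := by abel
          _ = U m j + (V (m + 1) j - V m j) := by rw [hj, e1, e2]
          _ = U m (j + 1) := e4.symm
      | pred j hj =>
        have e1 := hgs (m + 1) (-j - 1)
        have e2 := hgs m (-j - 1)
        have e3 := compat m (-j - 1)
        have hx : (-j - 1 : ℤ) + 1 = -j := by ring
        rw [hx] at e1 e2 e3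
        have e4 : U m (-j - 1 : ℤ) = U m (-j : ℤ) - (V (m + 1) (-j - 1 : ℤ) - V m (-j - 1 : ℤ)) := by
          rw [← e3]; abel
        calc (c (m + 1) + g (m + 1) (-j - 1 : ℤ)) - (c m + g m (-j - 1 : ℤ))
            = ((c (m + 1) + g (m + 1) (-j : ℤ)) - (c m + g m (-j : ℤ)))
              - ((g (m + 1) (-j : ℤ) - g (m + 1) (-j - 1 : ℤ))
                - (g m (-j : ℤ) - g m (-j - 1 : ℤ))) := by abel
          _ = U m (-j : ℤ) - (V (m + 1) (-j - 1 : ℤ) - V m (-j - 1 : ℤ)) := by rw [hj, e1, e2]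
          _ = U m (-j - 1 : ℤ) := e4.symm
    exact ⟨hΔm k, hΔn m k⟩
  · intro r hr m k
    have h1 := (hr m k).1
    have h2 := (hr m k).2
    have e1 := (hr (m + 1) k).2
    have e2 := (hr m k).2
    have hm : (m + 1 - 1 : ℤ) = m := by ring
    rw [hm] at e1
    refine ⟨?_, ?_, ?_⟩
    · rw [h1]
      rw [dotProduct_neg, dotProduct_smul, dot_self_cross]
      simp
    · rw [h2]
      rw [dotProduct_smul, dot_self_cross]
      simp
    · have key : r (m + 1) (k + 1) - r (m + 1) k - r m (k + 1) + r m k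
          = a m k • (N (m + 1) k ⨯₃ N m k) - a (m - 1) k • (N m k ⨯₃ N (m - 1) k) := by
        rw [← e1, ← e2]; abel
      rw [key, dotProduct_sub, dotProduct_smul, dotProduct_smul,
        dot_self_cross, dot_cross_self]
      simp
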